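/- Assume ν > (p−1)/min{d_1(α,β), d_2(α,β), d_3(α,β)}. If x_1, x_2, c_1, c_2 > 0 satisfy the three constraints x_1 + x_2 ≤ c_1 + c_2, f_1(x_1,x_2) ≥ f_1(c_1,c_2), and f_2(x_1,x_2) ≥ f_2(c_1,c_2), then x_1 = c_1 and x_2 = c_2. Moreover, if α = β = p then d_1(α,β) = d_2(α,β) = d_3(α,β) = p, so in that case the hypothesis on ν reduces to ν > (p−1)/p = 2/N. -/

import Mathlib

noncomputable section

set_option maxHeartbeats 1000000

/-- The constant d₁(α,β). -/
def d1 (p a b : ℝ) : ℝ :=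
  if a = b then p
  else 2 * p * (1 - a / 2) ^ (a / (2 * p)) * (1 - b / 2) ^ (b / (2 * p))

/-- The constant d₂(α,β). -/
def d2 (a b : ℝ) : ℝ :=
  b * (1 - b / 2) ^ (1 - a / 2) * (1 - a / 2) ^ (a / 2)
    + (1 / 2) * a * b * (1 - a / 2) ^ (1 - a / 2) * (1 - b / 2) ^ (a / 2 - 1)

/-- The constant d₃(α,β). -/
def d3 (a b : ℝ) : ℝ :=
  a * (1 - a / 2) ^ (1 - b / 2) * (1 - b / 2) ^ (b / 2)
    + (1 / 2) * a * b * (1 - a / 2) ^ (1 - b / 2) * (1 - b / 2) ^ (b / 2 - 1)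

/-- Weighted AM–GM specialized to powers of a fixed positive `r`, with weights chosen
so that the `r`-dependence cancels in the geometric mean. -/
lemma amgm_r (w₁ w₂ c₁ c₂ e₁ e₂ r : ℝ) (hw₁ : 0 < w₁) (hw₂ : 0 < w₂) (hw : w₁ + w₂ = 1)
    (hc₁ : 0 < c₁) (hc₂ : 0 < c₂) (hr : 0 < r) (he : w₁ * e₁ + w₂ * e₂ = 0) :
    (c₁ / w₁) ^ w₁ * (c₂ / w₂) ^ w₂ ≤ c₁ * r ^ e₁ + c₂ * r ^ e₂ := by
  have h := Real.geom_mean_le_arith_mean2_weighted hw₁.le hw₂.le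
    (show (0:ℝ) ≤ c₁ / w₁ * r ^ e₁ by positivity)
    (show (0:ℝ) ≤ c₂ / w₂ * r ^ e₂ by positivity) hw
  have hr0 : r ^ (e₁ * w₁) * r ^ (e₂ * w₂) = 1 := by
    rw [← Real.rpow_add hr, show e₁ * w₁ + e₂ * w₂ = 0 by linarith [he], Real.rpow_zero]
  have hL : (c₁ / w₁ * r ^ e₁) ^ w₁ * (c₂ / w₂ * r ^ e₂) ^ w₂
      = (c₁ / w₁) ^ w₁ * (c₂ / w₂) ^ w₂ := by
    rw [Real.mul_rpow (by positivity) (by positivity),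
        Real.mul_rpow (by positivity) (by positivity),
        ← Real.rpow_mul hr.le, ← Real.rpow_mul hr.le]
    linear_combination ((c₁ / w₁) ^ w₁ * (c₂ / w₂) ^ w₂) * hr0
  have hR : w₁ * (c₁ / w₁ * r ^ e₁) + w₂ * (c₂ / w₂ * r ^ e₂) = c₁ * r ^ e₁ + c₂ * r ^ e₂ := by
    field_simp
  rw [hL, hR] at h
  exact h

/-- Pointwise bound needed for monotonicity of `f₁` along the simplex. -/
lemma K1 (p a b ν : ℝ) (ha : 0 < a) (ha2 : a < 2) (hb : 0 < b) (hb2 : b < 2)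
    (hab : a + b = 2 * p) (hνa : 0 < ν * a)
    (hM : p - 1 < ν * (a * ((1 - a/2) / (1 - b/2)) ^ (1 - b/2)))
    (s y : ℝ) (hs : 0 < s) (hy : 0 < y) :
    (p - 1) * s ^ (p - 2) <
      ν * a * ((1 - a/2) * s ^ (a/2 - 2) * y ^ (b/2) + b/2 * s ^ (a/2 - 1) * y ^ (b/2 - 1)) := by
  have hA : (0:ℝ) < 1 - a/2 := by linarith
  have hB : (0:ℝ) < 1 - b/2 := by linarith
  have hr : 0 < y / s := div_pos hy hs
  have hgm := amgm_r (1 - b/2) (b/2) (1 - a/2) (b/2) (b/2) (b/2 - 1) (y/s)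
    hB (by linarith) (by ring) hA (by linarith) hr (by ring)
  rw [div_self (by linarith : (b/2:ℝ) ≠ 0), Real.one_rpow, mul_one] at hgm
  have h1 : s ^ (p-2) * (y/s) ^ (b/2) = s ^ (a/2 - 2) * y ^ (b/2) := by
    rw [Real.div_rpow hy.le hs.le, show (a/2 - 2 : ℝ) = (p-2) - (b/2) by linarith,
        Real.rpow_sub hs (p-2) (b/2), ← mul_div_assoc, div_mul_eq_mul_div]
  have h2 : s ^ (p-2) * (y/s) ^ (b/2 - 1) = s ^ (a/2 - 1) * y ^ (b/2 - 1) := by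
    rw [Real.div_rpow hy.le hs.le, show (a/2 - 1 : ℝ) = (p-2) - (b/2 - 1) by linarith,
        Real.rpow_sub hs (p-2) (b/2 - 1), ← mul_div_assoc, div_mul_eq_mul_div]
  have hsp : 0 < s ^ (p-2) := Real.rpow_pos_of_pos hs _
  have step1 : (p-1) * s ^ (p-2) < ν * (a * ((1 - a/2) / (1 - b/2)) ^ (1 - b/2)) * s ^ (p-2) :=
    mul_lt_mul_of_pos_right hM hsp
  have step2' := mul_le_mul_of_nonneg_right
    (mul_le_mul_of_nonneg_left hgm hνa.le) hsp.le
  have h3 : ((1 - a/2) * (y/s) ^ (b/2) + b/2 * (y/s) ^ (b/2 - 1)) * s ^ (p-2)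
      = (1 - a/2) * s ^ (a/2 - 2) * y ^ (b/2) + b/2 * s ^ (a/2 - 1) * y ^ (b/2 - 1) := by
    calc ((1 - a/2) * (y/s) ^ (b/2) + b/2 * (y/s) ^ (b/2 - 1)) * s ^ (p-2)
        = (1 - a/2) * (s ^ (p-2) * (y/s) ^ (b/2))
          + b/2 * (s ^ (p-2) * (y/s) ^ (b/2 - 1)) := by ring
      _ = (1 - a/2) * (s ^ (a/2 - 2) * y ^ (b/2))
          + b/2 * (s ^ (a/2 - 1) * y ^ (b/2 - 1)) := by rw [h1, h2]
      _ = (1 - a/2) * s ^ (a/2 - 2) * y ^ (b/2) + b/2 * s ^ (a/2 - 1) * y ^ (b/2 - 1) := by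
          ring
  have h4 := congrArg (fun z : ℝ => ν * a * z) h3
  beta_reduce at h4
  linarith [step1, step2', h4]

/-- Pointwise bound needed for monotonicity of `f₂` along the simplex. -/
lemma K2 (p a b ν : ℝ) (ha : 0 < a) (ha2 : a < 2) (hb : 0 < b) (hb2 : b < 2)
    (hab : a + b = 2 * p) (hνb : 0 < ν * b)
    (hM : p - 1 < ν * (b * ((1 - b/2) / (1 - a/2)) ^ (1 - a/2)))
    (s y : ℝ) (hs : 0 < s) (hy : 0 < y) :
    (p - 1) * y ^ (p - 2) <
      ν * b * (a/2 * s ^ (a/2 - 1) * y ^ (b/2 - 1) + (1 - b/2) * s ^ (a/2) * y ^ (b/2 - 2)) := by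
  have hA : (0:ℝ) < 1 - a/2 := by linarith
  have hB : (0:ℝ) < 1 - b/2 := by linarith
  have hr : 0 < s / y := div_pos hs hy
  have hgm := amgm_r (a/2) (1 - a/2) (a/2) (1 - b/2) (a/2 - 1) (a/2) (s/y)
    (by linarith) hA (by ring) (by linarith) hB hr (by ring)
  rw [div_self (by linarith : (a/2:ℝ) ≠ 0), Real.one_rpow, one_mul] at hgm
  have h1 : y ^ (p-2) * (s/y) ^ (a/2 - 1) = s ^ (a/2 - 1) * y ^ (b/2 - 1) := by
    rw [show s ^ (a/2 - 1) * y ^ (b/2 - 1) = y ^ (b/2 - 1) * s ^ (a/2 - 1) from mul_comm _ _,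
        Real.div_rpow hs.le hy.le, show (b/2 - 1 : ℝ) = (p-2) - (a/2 - 1) by linarith,
        Real.rpow_sub hy (p-2) (a/2 - 1), ← mul_div_assoc, div_mul_eq_mul_div, mul_comm]
  have h2 : y ^ (p-2) * (s/y) ^ (a/2) = s ^ (a/2) * y ^ (b/2 - 2) := by
    rw [show s ^ (a/2) * y ^ (b/2 - 2) = y ^ (b/2 - 2) * s ^ (a/2) from mul_comm _ _,
        Real.div_rpow hs.le hy.le, show (b/2 - 2 : ℝ) = (p-2) - (a/2) by linarith,
        Real.rpow_sub hy (p-2) (a/2), ← mul_div_assoc, div_mul_eq_mul_div, mul_comm]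
  have hyp : 0 < y ^ (p-2) := Real.rpow_pos_of_pos hy _
  have step1 : (p-1) * y ^ (p-2) < ν * (b * ((1 - b/2) / (1 - a/2)) ^ (1 - a/2)) * y ^ (p-2) :=
    mul_lt_mul_of_pos_right hM hyp
  have step2' := mul_le_mul_of_nonneg_right
    (mul_le_mul_of_nonneg_left hgm hνb.le) hyp.le
  have h3 : (a/2 * (s/y) ^ (a/2 - 1) + (1 - b/2) * (s/y) ^ (a/2)) * y ^ (p-2)
      = a/2 * s ^ (a/2 - 1) * y ^ (b/2 - 1) + (1 - b/2) * s ^ (a/2) * y ^ (b/2 - 2) := by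
    calc (a/2 * (s/y) ^ (a/2 - 1) + (1 - b/2) * (s/y) ^ (a/2)) * y ^ (p-2)
        = a/2 * (y ^ (p-2) * (s/y) ^ (a/2 - 1))
          + (1 - b/2) * (y ^ (p-2) * (s/y) ^ (a/2)) := by ring
      _ = a/2 * (s ^ (a/2 - 1) * y ^ (b/2 - 1))
          + (1 - b/2) * (s ^ (a/2) * y ^ (b/2 - 2)) := by rw [h1, h2]
      _ = a/2 * s ^ (a/2 - 1) * y ^ (b/2 - 1) + (1 - b/2) * s ^ (a/2) * y ^ (b/2 - 2) := by
          ring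
  have h4 := congrArg (fun z : ℝ => ν * b * z) h3
  beta_reduce at h4
  linarith [step1, step2', h4]

/-- The equal-sum rigidity: on the segment x₁ + x₂ = S the two constraint functions are
strictly monotone in opposite directions, forcing x₁ = c₁. -/
lemma seg (p a b ν S x₁ c₁ : ℝ) (hp1 : 1 < p) (hν0 : 0 < ν) (ha : 0 < a) (hb : 0 < b)
    (hK1 : ∀ s y : ℝ, 0 < s → 0 < y → (p - 1) * s ^ (p - 2) <
      ν * a * ((1 - a/2) * s ^ (a/2 - 2) * y ^ (b/2) + b/2 * s ^ (a/2 - 1) * y ^ (b/2 - 1)))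
    (hK2 : ∀ s y : ℝ, 0 < s → 0 < y → (p - 1) * y ^ (p - 2) <
      ν * b * (a/2 * s ^ (a/2 - 1) * y ^ (b/2 - 1) + (1 - b/2) * s ^ (a/2) * y ^ (b/2 - 2)))
    (hx₁ : 0 < x₁) (hx₁S : x₁ < S) (hc₁ : 0 < c₁) (hc₁S : c₁ < S)
    (hf1 : c₁ ^ (p-1) + ν * a * (c₁ ^ (a/2 - 1) * (S - c₁) ^ (b/2)) ≤
           x₁ ^ (p-1) + ν * a * (x₁ ^ (a/2 - 1) * (S - x₁) ^ (b/2)))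
    (hf2 : (S - c₁) ^ (p-1) + ν * b * (c₁ ^ (a/2) * (S - c₁) ^ (b/2 - 1)) ≤
           (S - x₁) ^ (p-1) + ν * b * (x₁ ^ (a/2) * (S - x₁) ^ (b/2 - 1))) :
    x₁ = c₁ := by
  have hD1 : ∀ s ∈ Set.Ioo (0:ℝ) S,
      HasDerivAt (fun s : ℝ => s ^ (p-1) + ν * a * (s ^ (a/2 - 1) * (S - s) ^ (b/2)))
        ((p-1) * s ^ (p-2) + ν * a * ((a/2 - 1) * s ^ (a/2 - 2) * (S - s) ^ (b/2)
          + s ^ (a/2 - 1) * (b/2 * (S - s) ^ (b/2 - 1) * (-1)))) s := by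
    rintro s ⟨hs0, hsS⟩
    have hy : (0:ℝ) < S - s := by linarith
    have h1 : HasDerivAt (fun s : ℝ => s ^ (p-1)) ((p-1) * s ^ (p-2)) s := by
      have := Real.hasDerivAt_rpow_const (x := s) (p := p-1) (Or.inl hs0.ne')
      simpa [show p - 1 - 1 = p - 2 by ring] using this
    have h2 : HasDerivAt (fun s : ℝ => s ^ (a/2 - 1)) ((a/2 - 1) * s ^ (a/2 - 2)) s := by
      have := Real.hasDerivAt_rpow_const (x := s) (p := a/2 - 1) (Or.inl hs0.ne')
      simpa [show a/2 - 1 - 1 = a/2 - 2 by ring] using this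
    have hin : HasDerivAt (fun s : ℝ => S - s) (-1) s := (hasDerivAt_id s).const_sub S
    have h3 : HasDerivAt (fun s : ℝ => (S - s) ^ (b/2)) (b/2 * (S - s) ^ (b/2 - 1) * (-1)) s := by
      have hout := Real.hasDerivAt_rpow_const (x := S - s) (p := b/2) (Or.inl hy.ne')
      simpa [Function.comp_def] using hout.comp s hin
    exact h1.add ((h2.mul h3).const_mul (ν * a))
  have hD2 : ∀ s ∈ Set.Ioo (0:ℝ) S,
      HasDerivAt (fun s : ℝ => (S - s) ^ (p-1) + ν * b * (s ^ (a/2) * (S - s) ^ (b/2 - 1)))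
        ((p-1) * (S - s) ^ (p-2) * (-1) + ν * b * (a/2 * s ^ (a/2 - 1) * (S - s) ^ (b/2 - 1)
          + s ^ (a/2) * ((b/2 - 1) * (S - s) ^ (b/2 - 2) * (-1)))) s := by
    rintro s ⟨hs0, hsS⟩
    have hy : (0:ℝ) < S - s := by linarith
    have hin : HasDerivAt (fun s : ℝ => S - s) (-1) s := (hasDerivAt_id s).const_sub S
    have h4 : HasDerivAt (fun s : ℝ => (S - s) ^ (p-1)) ((p-1) * (S - s) ^ (p-2) * (-1)) s := by
      have hout := Real.hasDerivAt_rpow_const (x := S - s) (p := p-1) (Or.inl hy.ne')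
      have := hout.comp s hin
      simpa [Function.comp_def, show p - 1 - 1 = p - 2 by ring] using this
    have h5 : HasDerivAt (fun s : ℝ => s ^ (a/2)) (a/2 * s ^ (a/2 - 1)) s :=
      Real.hasDerivAt_rpow_const (x := s) (p := a/2) (Or.inl hs0.ne')
    have h6 : HasDerivAt (fun s : ℝ => (S - s) ^ (b/2 - 1))
        ((b/2 - 1) * (S - s) ^ (b/2 - 2) * (-1)) s := by
      have hout := Real.hasDerivAt_rpow_const (x := S - s) (p := b/2 - 1) (Or.inl hy.ne')
      have := hout.comp s hin
      simpa [Function.comp_def, show b/2 - 1 - 1 = b/2 - 2 by ring] using this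
    exact h4.add ((h5.mul h6).const_mul (ν * b))
  have hΦ : StrictAntiOn (fun s : ℝ => s ^ (p-1) + ν * a * (s ^ (a/2 - 1) * (S - s) ^ (b/2)))
      (Set.Ioo 0 S) := by
    apply strictAntiOn_of_deriv_neg (convex_Ioo 0 S)
    · exact fun s hs => ((hD1 s hs).differentiableAt).continuousAt.continuousWithinAt
    · intro s hs
      rw [interior_Ioo] at hs
      rw [(hD1 s hs).deriv]
      have hy : (0:ℝ) < S - s := by linarith [hs.2]
      have hk := hK1 s (S - s) hs.1 hy
      have key : (p-1) * s ^ (p-2) + ν * a * ((a/2 - 1) * s ^ (a/2 - 2) * (S - s) ^ (b/2)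
            + s ^ (a/2 - 1) * (b/2 * (S - s) ^ (b/2 - 1) * (-1)))
          = (p-1) * s ^ (p-2) - ν * a * ((1 - a/2) * s ^ (a/2 - 2) * (S - s) ^ (b/2)
            + b/2 * s ^ (a/2 - 1) * (S - s) ^ (b/2 - 1)) := by ring
      linarith [hk, key]
  have hΨ : StrictMonoOn (fun s : ℝ => (S - s) ^ (p-1) + ν * b * (s ^ (a/2) * (S - s) ^ (b/2 - 1)))
      (Set.Ioo 0 S) := by
    apply strictMonoOn_of_deriv_pos (convex_Ioo 0 S)
    · exact fun s hs => ((hD2 s hs).differentiableAt).continuousAt.continuousWithinAt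
    · intro s hs
      rw [interior_Ioo] at hs
      rw [(hD2 s hs).deriv]
      have hy : (0:ℝ) < S - s := by linarith [hs.2]
      have hk := hK2 s (S - s) hs.1 hy
      have key : (p-1) * (S - s) ^ (p-2) * (-1) + ν * b * (a/2 * s ^ (a/2 - 1) * (S - s) ^ (b/2 - 1)
            + s ^ (a/2) * ((b/2 - 1) * (S - s) ^ (b/2 - 2) * (-1)))
          = ν * b * (a/2 * s ^ (a/2 - 1) * (S - s) ^ (b/2 - 1)
            + (1 - b/2) * s ^ (a/2) * (S - s) ^ (b/2 - 2)) - (p-1) * (S - s) ^ (p-2) := by ring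
      linarith [hk, key]
  rcases lt_trichotomy x₁ c₁ with h | h | h
  · exfalso
    have hmono := hΨ (Set.mem_Ioo.2 ⟨hx₁, hx₁S⟩) (Set.mem_Ioo.2 ⟨hc₁, hc₁S⟩) h
    simp only [] at hmono
    linarith
  · exact h
  · exfalso
    have hanti := hΦ (Set.mem_Ioo.2 ⟨hc₁, hc₁S⟩) (Set.mem_Ioo.2 ⟨hx₁, hx₁S⟩) h
    simp only [] at hanti
    linarith

/-- the nonlinear constraint problem for the two-component system:
for ν > (p−1)/min{d₁,d₂,d₃}, the constraints force (x₁,x₂) = (c₁,c₂); moreover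
when α = β = p all three constants equal p, and (p−1)/p = 2/N. -/
theorem stmt15 (N : ℕ) (hN : 5 ≤ N) (p : ℝ) (hp : p = (N : ℝ) / ((N : ℝ) - 2))
    (a b : ℝ) (ha : 0 < a) (ha2 : a < 2) (hb : 0 < b) (hb2 : b < 2)
    (hab : a + b = 2 * p)
    (ν : ℝ) (hν0 : 0 < ν)
    (hν : ν > (p - 1) / min (min (d1 p a b) (d2 a b)) (d3 a b))
    (x₁ x₂ c₁ c₂ : ℝ) (hx₁ : 0 < x₁) (hx₂ : 0 < x₂) (hc₁ : 0 < c₁) (hc₂ : 0 < c₂)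
    (hsum : x₁ + x₂ ≤ c₁ + c₂)
    (hf1 : c₁ ^ (p - 1) + ν * a * c₁ ^ (a / 2 - 1) * c₂ ^ (b / 2) ≤
           x₁ ^ (p - 1) + ν * a * x₁ ^ (a / 2 - 1) * x₂ ^ (b / 2))
    (hf2 : c₂ ^ (p - 1) + ν * b * c₁ ^ (a / 2) * c₂ ^ (b / 2 - 1) ≤
           x₂ ^ (p - 1) + ν * b * x₁ ^ (a / 2) * x₂ ^ (b / 2 - 1)) :
    (x₁ = c₁ ∧ x₂ = c₂) ∧
    (a = b → d1 p a b = p ∧ d2 a b = p ∧ d3 a b = p ∧ (p - 1) / p = 2 / (N : ℝ)) := by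
  have hN5 : (5:ℝ) ≤ (N:ℝ) := by exact_mod_cast hN
  have hN2 : (0:ℝ) < (N:ℝ) - 2 := by linarith
  have hp1 : 1 < p := by rw [hp, lt_div_iff₀ hN2]; linarith
  have hp2 : p < 2 := by rw [hp, div_lt_iff₀ hN2]; linarith
  have hA : (0:ℝ) < 1 - a/2 := by linarith
  have hB : (0:ℝ) < 1 - b/2 := by linarith
  -- d₃ equals the sharp constant for K1
  have hd3 : d3 a b = a * ((1 - a/2) / (1 - b/2)) ^ (1 - b/2) := by
    have e1 : ((1 - a/2) / (1 - b/2) : ℝ) ^ (1 - b/2)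
        = (1 - a/2) ^ (1 - b/2) * (1 - b/2) ^ (b/2 - 1) := by
      rw [Real.div_rpow hA.le hB.le, show (b/2 - 1 : ℝ) = -(1 - b/2) by ring,
          Real.rpow_neg hB.le, div_eq_mul_inv]
    have e2 : (1 - b/2 : ℝ) ^ (b/2) = (1 - b/2) ^ (b/2 - 1) * (1 - b/2) := by
      rw [← Real.rpow_add_one hB.ne' (b/2 - 1), show (b/2 - 1 + 1 : ℝ) = b/2 by ring]
    simp only [d3]
    rw [e1, e2]
    ring
  -- d₁ ≤ the sharp constant for K2
  have hd1M2 : d1 p a b ≤ b * ((1 - b/2) / (1 - a/2)) ^ (1 - a/2) := by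
    by_cases hab' : a = b
    · have hap : a = p := by linarith
      simp only [d1, if_pos hab']
      rw [← hab', div_self hA.ne', Real.one_rpow, mul_one]
      linarith
    · simp only [d1, if_neg hab']
      have hp0 : (0:ℝ) < p := by linarith
      set eA : ℝ := (a/2 + p * (1 - a/2)) / p with heA
      set eB : ℝ := (p - 1) * (a/2) / p with heB
      have heApos : 0 < eA := by
        apply div_pos _ hp0
        have := mul_pos hp0 hA
        linarith
      have heBpos : 0 < eB := by
        apply div_pos _ hp0
        exact mul_pos (by linarith) (by linarith)
      have heAB : eA + eB = 1 := by
        rw [heA, heB]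
        field_simp
        ring
      have hgm := Real.geom_mean_le_arith_mean2_weighted heApos.le heBpos.le hA.le hB.le heAB
      have hpoly : p * (eA * (1 - a/2) + eB * (1 - b/2)) ≤ b/2 := by
        have h1 : p * eA = a/2 + p * (1 - a/2) := by
          rw [heA]; field_simp
        have h2 : p * eB = (p - 1) * (a/2) := by
          rw [heB]; field_simp
        have key : b/2 - p * (eA * (1 - a/2) + eB * (1 - b/2))
            = (p - 1) * (a/2) * (1 - a/2 + b/2) + (a + b - 2*p)/2
              - (p * eA - (a/2 + p * (1 - a/2))) * (1 - a/2)
              - (p * eB - (p - 1) * (a/2)) * (1 - b/2) := by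
          ring
        have hpos : 0 ≤ (p - 1) * (a/2) * (1 - a/2 + b/2) := by
          apply mul_nonneg (mul_nonneg (by linarith) (by linarith))
          linarith
        rw [h1, h2] at key
        linarith [key, hpos]
      have hcore : 2 * p * ((1 - a/2) ^ eA * (1 - b/2) ^ eB) ≤ b := by
        have := mul_le_mul_of_nonneg_left hgm (by positivity : (0:ℝ) ≤ 2 * p)
        linarith
      have haexp : a / (2*p) = eA - (1 - a/2) := by
        rw [heA]; field_simp; ring
      have hbexp : b / (2*p) = eB + (1 - a/2) := by
        rw [heB]; field_simp
        first
        | linear_combination (3*p) * hab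
        | linear_combination p * hab
        | linear_combination (2*p) * hab
        | nlinarith [hab, hp0]
      have hsplit1 : (1 - a/2 : ℝ) ^ (a / (2*p)) = (1 - a/2) ^ eA / (1 - a/2) ^ (1 - a/2) := by
        rw [haexp, Real.rpow_sub hA]
      have hsplit2 : (1 - b/2 : ℝ) ^ (b / (2*p)) = (1 - b/2) ^ eB * (1 - b/2) ^ (1 - a/2) := by
        rw [hbexp, Real.rpow_add hB]
      have hYX : ((1 - b/2) / (1 - a/2) : ℝ) ^ (1 - a/2)
          = (1 - b/2) ^ (1 - a/2) / (1 - a/2) ^ (1 - a/2) :=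
        Real.div_rpow hB.le hA.le _
      rw [hsplit1, hsplit2, hYX]
      calc 2 * p * ((1 - a/2) ^ eA / (1 - a/2) ^ (1 - a/2))
            * ((1 - b/2) ^ eB * (1 - b/2) ^ (1 - a/2))
          = (2 * p * ((1 - a/2) ^ eA * (1 - b/2) ^ eB))
            * ((1 - b/2) ^ (1 - a/2) / (1 - a/2) ^ (1 - a/2)) := by ring
        _ ≤ b * ((1 - b/2) ^ (1 - a/2) / (1 - a/2) ^ (1 - a/2)) := by
            apply mul_le_mul_of_nonneg_right hcore
            positivity
  -- positivity of the three constants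
  have hd1pos : 0 < d1 p a b := by
    by_cases hab' : a = b
    · simp only [d1, if_pos hab']; linarith
    · simp only [d1, if_neg hab']
      have := Real.rpow_pos_of_pos hA (a / (2*p))
      have := Real.rpow_pos_of_pos hB (b / (2*p))
      positivity
  have hd2pos : 0 < d2 a b := by
    simp only [d2]
    have t1 : 0 < b * (1 - b/2) ^ (1 - a/2) * (1 - a/2) ^ (a/2) :=
      mul_pos (mul_pos hb (Real.rpow_pos_of_pos hB _)) (Real.rpow_pos_of_pos hA _)
    have t2 : 0 < 1/2 * a * b * (1 - a/2) ^ (1 - a/2) * (1 - b/2) ^ (a/2 - 1) := by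
      have := Real.rpow_pos_of_pos hA (1 - a/2)
      have := Real.rpow_pos_of_pos hB (a/2 - 1)
      positivity
    linarith
  have hd3pos : 0 < d3 a b := by
    rw [hd3]
    have : 0 < ((1 - a/2) / (1 - b/2) : ℝ) ^ (1 - b/2) :=
      Real.rpow_pos_of_pos (div_pos hA hB) _
    positivity
  have hmpos : 0 < min (min (d1 p a b) (d2 a b)) (d3 a b) :=
    lt_min (lt_min hd1pos hd2pos) hd3pos
  have hνm : p - 1 < ν * min (min (d1 p a b) (d2 a b)) (d3 a b) := by
    rw [gt_iff_lt, div_lt_iff₀ hmpos] at hν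
    linarith
  have hM3 : p - 1 < ν * (a * ((1 - a/2) / (1 - b/2)) ^ (1 - b/2)) := by
    have h1 : min (min (d1 p a b) (d2 a b)) (d3 a b) ≤ a * ((1 - a/2) / (1 - b/2)) ^ (1 - b/2) := by
      rw [← hd3]; exact min_le_right _ _
    have h2 := mul_le_mul_of_nonneg_left h1 hν0.le
    linarith
  have hM2 : p - 1 < ν * (b * ((1 - b/2) / (1 - a/2)) ^ (1 - a/2)) := by
    have h1 : min (min (d1 p a b) (d2 a b)) (d3 a b) ≤ d1 p a b :=
      le_trans (min_le_left _ _) (min_le_left _ _)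
    have h2 := mul_le_mul_of_nonneg_left (le_trans h1 hd1M2) hν0.le
    linarith
  have hK1' : ∀ s y : ℝ, 0 < s → 0 < y → (p - 1) * s ^ (p - 2) <
      ν * a * ((1 - a/2) * s ^ (a/2 - 2) * y ^ (b/2) + b/2 * s ^ (a/2 - 1) * y ^ (b/2 - 1)) :=
    fun s y hs hy => K1 p a b ν ha ha2 hb hb2 hab (mul_pos hν0 ha) hM3 s y hs hy
  have hK2' : ∀ s y : ℝ, 0 < s → 0 < y → (p - 1) * y ^ (p - 2) <
      ν * b * (a/2 * s ^ (a/2 - 1) * y ^ (b/2 - 1) + (1 - b/2) * s ^ (a/2) * y ^ (b/2 - 2)) :=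
    fun s y hs hy => K2 p a b ν ha ha2 hb hb2 hab (mul_pos hν0 hb) hM2 s y hs hy
  -- scaling reduction
  have hcs : (0:ℝ) < c₁ + c₂ := by linarith
  set S : ℝ := x₁ + x₂ with hS
  have hSpos : 0 < S := by rw [hS]; linarith
  set t : ℝ := S / (c₁ + c₂) with ht
  have ht0 : 0 < t := div_pos hSpos hcs
  have ht1 : t ≤ 1 := by rw [ht, div_le_one hcs]; linarith
  have htc : t * (c₁ + c₂) = S := div_mul_cancel₀ S hcs.ne'
  have htp : t ^ (p - 1) ≤ 1 := Real.rpow_le_one ht0.le ht1 (by linarith)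
  have hexp1 : t ^ (a/2 - 1) * t ^ (b/2) = t ^ (p - 1) := by
    rw [← Real.rpow_add ht0]; congr 1; linarith
  have hexp2 : t ^ (a/2) * t ^ (b/2 - 1) = t ^ (p - 1) := by
    rw [← Real.rpow_add ht0]; congr 1; linarith
  have hsc1 : (t*c₁) ^ (p-1) + ν * a * ((t*c₁) ^ (a/2 - 1) * (t*c₂) ^ (b/2))
      = t ^ (p-1) * (c₁ ^ (p-1) + ν * a * (c₁ ^ (a/2 - 1) * c₂ ^ (b/2))) := by
    rw [Real.mul_rpow ht0.le hc₁.le, Real.mul_rpow ht0.le hc₁.le, Real.mul_rpow ht0.le hc₂.le]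
    linear_combination (ν * a * (c₁ ^ (a/2 - 1) * c₂ ^ (b/2))) * hexp1
  have hsc2 : (t*c₂) ^ (p-1) + ν * b * ((t*c₁) ^ (a/2) * (t*c₂) ^ (b/2 - 1))
      = t ^ (p-1) * (c₂ ^ (p-1) + ν * b * (c₁ ^ (a/2) * c₂ ^ (b/2 - 1))) := by
    rw [Real.mul_rpow ht0.le hc₂.le, Real.mul_rpow ht0.le hc₂.le, Real.mul_rpow ht0.le hc₁.le]
    linear_combination (ν * b * (c₁ ^ (a/2) * c₂ ^ (b/2 - 1))) * hexp2
  have hFc1pos : 0 < c₁ ^ (p-1) + ν * a * (c₁ ^ (a/2 - 1) * c₂ ^ (b/2)) := by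
    have := Real.rpow_pos_of_pos hc₁ (p-1)
    have := Real.rpow_pos_of_pos hc₁ (a/2 - 1)
    have := Real.rpow_pos_of_pos hc₂ (b/2)
    positivity
  have hFc2pos : 0 < c₂ ^ (p-1) + ν * b * (c₁ ^ (a/2) * c₂ ^ (b/2 - 1)) := by
    have := Real.rpow_pos_of_pos hc₂ (p-1)
    have := Real.rpow_pos_of_pos hc₁ (a/2)
    have := Real.rpow_pos_of_pos hc₂ (b/2 - 1)
    positivity
  have hSx : S - x₁ = x₂ := by rw [hS]; ring
  have hSc : S - t*c₁ = t*c₂ := by rw [← htc]; ring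
  have htc₁ : 0 < t * c₁ := mul_pos ht0 hc₁
  have htc₂ : 0 < t * c₂ := mul_pos ht0 hc₂
  have hx₁S : x₁ < S := by rw [hS]; linarith
  have htc₁S : t * c₁ < S := by rw [← htc]; linarith [htc₂]
  -- the rescaled constraints
  have hg1 : (t*c₁) ^ (p-1) + ν * a * ((t*c₁) ^ (a/2 - 1) * (S - t*c₁) ^ (b/2)) ≤
      x₁ ^ (p-1) + ν * a * (x₁ ^ (a/2 - 1) * (S - x₁) ^ (b/2)) := by
    rw [hSc, hSx, hsc1]
    have := mul_le_of_le_one_left hFc1pos.le htp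
    linarith [hf1]
  have hg2 : (S - t*c₁) ^ (p-1) + ν * b * ((t*c₁) ^ (a/2) * (S - t*c₁) ^ (b/2 - 1)) ≤
      (S - x₁) ^ (p-1) + ν * b * (x₁ ^ (a/2) * (S - x₁) ^ (b/2 - 1)) := by
    rw [hSc, hSx, hsc2]
    have := mul_le_of_le_one_left hFc2pos.le htp
    linarith [hf2]
  have hx₁eq : x₁ = t * c₁ :=
    seg p a b ν S x₁ (t*c₁) hp1 hν0 ha hb hK1' hK2' hx₁ hx₁S htc₁ htc₁S hg1 hg2
  have hx₂eq : x₂ = t * c₂ := by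
    rw [← hSx, hx₁eq]
    exact hSc
  -- t = 1
  have ht1' : t = 1 := by
    by_contra hne
    have htlt : t < 1 := lt_of_le_of_ne ht1 hne
    have hplt : t ^ (p-1) < 1 := Real.rpow_lt_one ht0.le htlt (by linarith)
    have hle : c₁ ^ (p-1) + ν * a * (c₁ ^ (a/2 - 1) * c₂ ^ (b/2)) ≤
        t ^ (p-1) * (c₁ ^ (p-1) + ν * a * (c₁ ^ (a/2 - 1) * c₂ ^ (b/2))) := by
      rw [← hsc1, ← hx₁eq, ← hx₂eq]
      linarith [hf1]
    have := mul_lt_of_lt_one_left hFc1pos hplt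
    linarith [hle]
  constructor
  · constructor
    · rw [hx₁eq, ht1', one_mul]
    · rw [hx₂eq, ht1', one_mul]
  · intro hab'
    have hap : a = p := by linarith
    have hbp : b = p := by linarith
    have hA' : (0:ℝ) < 1 - p/2 := by linarith
    have e1 : (1 - p/2 : ℝ) ^ (1 - p/2) * (1 - p/2) ^ (p/2) = 1 - p/2 := by
      rw [← Real.rpow_add hA', show (1 - p/2) + p/2 = (1:ℝ) by ring, Real.rpow_one]
    have e2 : (1 - p/2 : ℝ) ^ (1 - p/2) * (1 - p/2) ^ (p/2 - 1) = 1 := by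
      rw [← Real.rpow_add hA', show (1 - p/2) + (p/2 - 1) = (0:ℝ) by ring, Real.rpow_zero]
    refine ⟨by simp [d1, hab'], ?_, ?_, ?_⟩
    · rw [hap, hbp]
      simp only [d2]
      calc p * (1 - p/2) ^ (1 - p/2) * (1 - p/2) ^ (p/2)
            + 1/2 * p * p * (1 - p/2) ^ (1 - p/2) * (1 - p/2) ^ (p/2 - 1)
          = p * ((1 - p/2) ^ (1 - p/2) * (1 - p/2) ^ (p/2))
            + 1/2 * p * p * ((1 - p/2) ^ (1 - p/2) * (1 - p/2) ^ (p/2 - 1)) := by ring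
        _ = p * (1 - p/2) + 1/2 * p * p * 1 := by rw [e1, e2]
        _ = p := by ring
    · rw [hap, hbp]
      simp only [d3]
      calc p * (1 - p/2) ^ (1 - p/2) * (1 - p/2) ^ (p/2)
            + 1/2 * p * p * (1 - p/2) ^ (1 - p/2) * (1 - p/2) ^ (p/2 - 1)
          = p * ((1 - p/2) ^ (1 - p/2) * (1 - p/2) ^ (p/2))
            + 1/2 * p * p * ((1 - p/2) ^ (1 - p/2) * (1 - p/2) ^ (p/2 - 1)) := by ring
        _ = p * (1 - p/2) + 1/2 * p * p * 1 := by rw [e1, e2]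
        _ = p := by ring
    · rw [hp]
      have hN0 : (N:ℝ) ≠ 0 := by positivity
      field_simp
      ring
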